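/- If G and H have no central factors, then the restricted wreath product H ≀ G has no central factors. -/

import Mathlib

open Function

/-- The subgroup of finitely supported functions `B → H`, the base of the
restricted wreath product `H ≀ B`. -/
def restrictedPi (H B : Type*) [Group H] [Group B] : Subgroup (B → H) where
  carrier := {f | (mulSupport f).Finite}
  one_mem' := by simp
  mul_mem' {a b} ha hb := (ha.union hb).subset (mulSupport_mul a b)
  inv_mem' {a} ha := by simpa using ha

/-- The shift action of `b : B` on functions `B → H`. -/
def shiftEquiv (H B : Type*) [Group H] [Group B] (b : B) : (B → H) ≃* (B → H) where
  toFun f := fun x => f (b⁻¹ * x)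
  invFun f := fun x => f (b * x)
  left_inv f := by funext x; simp [← mul_assoc]
  right_inv f := by funext x; simp [← mul_assoc]
  map_mul' f g := rfl

lemma shiftEquiv_mem {H B : Type*} [Group H] [Group B] (b : B) (f : B → H)
    (hf : f ∈ restrictedPi H B) : shiftEquiv H B b f ∈ restrictedPi H B := by
  have h : mulSupport (shiftEquiv H B b f) ⊆ (fun x => b * x) '' mulSupport f := by
    intro x hx
    exact ⟨b⁻¹ * x, hx, by simp⟩
  exact Set.Finite.subset (Set.Finite.image _ hf) h

/-- The shift action of `B` on the finitely supported functions `B → H`. -/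
def shiftAut (H B : Type*) [Group H] [Group B] : B →* MulAut (restrictedPi H B) where
  toFun b :=
    { toFun := fun f => ⟨shiftEquiv H B b f, shiftEquiv_mem (H := H) (B := B) b f f.2⟩
      invFun := fun f => ⟨shiftEquiv H B b⁻¹ f, shiftEquiv_mem (H := H) (B := B) b⁻¹ f f.2⟩
      left_inv := fun f => by
        ext x
        simp [shiftEquiv, ← mul_assoc]
      right_inv := fun f => by
        ext x
        simp [shiftEquiv, ← mul_assoc]
      map_mul' := fun f g => rfl }
  map_one' := by
    ext f x
    simp [shiftEquiv]
  map_mul' a b := by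
    ext f x
    simp [shiftEquiv, mul_assoc]

/-- The restricted wreath product `H ≀ B`. -/
abbrev RestrictedWreath (H B : Type*) [Group H] [Group B] :=
  SemidirectProduct (restrictedPi H B) B (shiftAut H B)

/-- `K` has no central factors: whenever `L ≤ M` are normal subgroups of `K` with
`M/L` central in `K/L` (equivalently `⁅M, K⁆ ≤ L`), we have `M = L`. -/
def NoCentralFactors (K : Type*) [Group K] : Prop :=
  ∀ L M : Subgroup K, L.Normal → M.Normal → L ≤ M →
    ⁅M, (⊤ : Subgroup K)⁆ ≤ L → M = L


section Aux

open SemidirectProduct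

variable {H G : Type*} [Group H] [Group G]

open Classical in
/-- The function supported at `x` with value `h`, as a hom into the restricted product. -/
noncomputable def mulSingleHom (x : G) : H →* restrictedPi H G where
  toFun h := ⟨fun y => if y = x then h else 1, by
    refine (Set.finite_singleton x).subset fun y hy => ?_
    by_contra hne
    exact hy (if_neg (by simpa using hne))⟩
  map_one' := by
    ext y
    simp only [Subgroup.coe_one, Pi.one_apply, ite_self]
  map_mul' a b := by
    ext y
    by_cases hy : y = x <;> simp [hy]

open Classical in
lemma mulSingleHom_apply (x : G) (h : H) (y : G) :
    ((mulSingleHom x h : restrictedPi H G) : G → H) y = if y = x then h else 1 := rfl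

/-- Peel off the support one point at a time. -/
lemma prod_step (L : Subgroup (RestrictedWreath H G)) (S : Finset G) :
    ∀ f : restrictedPi H G, Function.mulSupport (f : G → H) ⊆ S →
      (∀ x : G, inl (mulSingleHom x ((f : G → H) x)) ∈ L) → inl f ∈ L := by
  classical
  induction S using Finset.induction_on with
  | empty =>
    intro f hsupp _
    have : f = 1 := by
      ext y
      have : y ∉ Function.mulSupport (f : G → H) := fun hy => by simpa using hsupp hy
      simpa using this
    rw [this, map_one]
    exact L.one_mem
  | @insert a S ha IH =>
    intro f hsupp hkey
    set f' : restrictedPi H G := (mulSingleHom a ((f : G → H) a))⁻¹ * f with hf'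
    have hf'val : ∀ y : G, (f' : G → H) y =
        (if y = a then (f : G → H) a else 1)⁻¹ * (f : G → H) y := fun y => rfl
    have hsupp' : Function.mulSupport (f' : G → H) ⊆ S := by
      intro y hy
      have hya : y ≠ a := by
        intro h
        apply hy
        rw [hf'val, h, if_pos rfl, inv_mul_cancel]
      have hyf : y ∈ Function.mulSupport (f : G → H) := by
        intro h
        apply hy
        rw [hf'val, if_neg hya, h, inv_one, one_mul]
      rcases Finset.mem_insert.mp (hsupp hyf) with h | h
      · exact absurd h hya
      · exact h
    have hkey' : ∀ x : G, inl (mulSingleHom x ((f' : G → H) x)) ∈ L := by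
      intro x
      by_cases hx : x = a
      · subst hx
        rw [hf'val, if_pos rfl, inv_mul_cancel, map_one, map_one]
        exact L.one_mem
      · rw [hf'val, if_neg hx, inv_one, one_mul]
        exact hkey x
    have hmem : inl f' ∈ L := IH f' hsupp' hkey'
    have : f = mulSingleHom a ((f : G → H) a) * f' := by
      rw [hf', ← mul_assoc, mul_inv_cancel, one_mul]
    rw [this, map_mul]
    exact L.mul_mem (hkey a) hmem

open scoped commutatorElement in
/-- Base step: if `inl f ∈ M` then `inl f ∈ L`. -/
lemma base_step (hH : NoCentralFactors H)
    (L M : Subgroup (RestrictedWreath H G)) (hL : L.Normal) (hM : M.Normal)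
    (hLM : L ≤ M) (hML : ⁅M, (⊤ : Subgroup (RestrictedWreath H G))⁆ ≤ L)
    (f : restrictedPi H G) (hf : inl f ∈ M) : inl f ∈ L := by
  classical
  have key : ∀ x : G, inl (mulSingleHom x ((f : G → H) x)) ∈ L := by
    intro x
    set ι : H →* RestrictedWreath H G := inl.comp (mulSingleHom x) with hι
    set ev : restrictedPi H G →* H :=
      (Pi.evalMonoidHom (fun _ => H) x).comp (restrictedPi H G).subtype with hev
    have hev_apply : ∀ e : restrictedPi H G, ev e = (e : G → H) x := fun _ => rfl
    set A : Subgroup H := (M.comap (inl : restrictedPi H G →* _)).map ev with hA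
    set L' : Subgroup H := L.comap ι with hL'
    have hANormal : A.Normal := by
      constructor
      rintro a ⟨e, he, rfl⟩ h
      refine ⟨mulSingleHom x h * e * (mulSingleHom x h)⁻¹, ?_, ?_⟩
      · show mulSingleHom x h * e * (mulSingleHom x h)⁻¹ ∈ M.comap inl
        rw [Subgroup.mem_comap, map_mul, map_mul, map_inv]
        exact hM.conj_mem _ he _
      · rw [hev_apply, hev_apply]
        show ((mulSingleHom x h * e * (mulSingleHom x h)⁻¹ : restrictedPi H G) : G → H) x
          = h * (e : G → H) x * h⁻¹
        simp [mulSingleHom_apply]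
    have hL'Normal : L'.Normal := by
      constructor
      intro l hl h
      simp only [hL', Subgroup.mem_comap, map_mul, map_inv] at hl ⊢
      exact hL.conj_mem _ hl _
    have hle : L' ≤ A := by
      intro l hl
      refine ⟨mulSingleHom x l, hLM hl, ?_⟩
      rw [hev_apply]
      simp [mulSingleHom_apply]
    have hcomm : ⁅A, (⊤ : Subgroup H)⁆ ≤ L' := by
      rw [Subgroup.commutator_le]
      rintro a ⟨e, he, rfl⟩ h -
      have heq : mulSingleHom (H := H) x ⁅ev e, h⁆ = ⁅e, mulSingleHom x h⁆ := by
        ext y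
        rw [hev_apply]
        show (if y = x then ⁅(e : G → H) x, h⁆ else 1)
          = ((⁅e, mulSingleHom x h⁆ : restrictedPi H G) : G → H) y
        simp only [commutatorElement_def, Subgroup.coe_mul, Subgroup.coe_inv,
          Pi.mul_apply, Pi.inv_apply, mulSingleHom_apply]
        by_cases hy : y = x
        · subst hy; simp
        · simp [hy]
      show ι ⁅ev e, h⁆ ∈ L
      rw [hι, MonoidHom.comp_apply, heq, map_commutatorElement]
      exact hML (Subgroup.commutator_mem_commutator he (Subgroup.mem_top _))
    have hAL : A = L' := hH L' A hL'Normal hANormal hle hcomm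
    have hfx : (f : G → H) x ∈ A := ⟨f, hf, rfl⟩
    rw [hAL] at hfx
    exact hfx
  exact prod_step L f.2.toFinset f (fun y hy => f.2.mem_toFinset.mpr hy) key

end Aux

/-- If `G` and `H` have no central factors, then the restricted wreath product
`H ≀ G` has no central factors. -/
theorem noCentralFactors_wreath (H G : Type*) [Group H] [Group G]
    (hH : NoCentralFactors H) (hG : NoCentralFactors G) :
    NoCentralFactors (RestrictedWreath H G) := by
  intro L M hL hM hLM hML
  refine le_antisymm ?_ hLM
  have hsurj : Function.Surjective (SemidirectProduct.rightHom : RestrictedWreath H G →* G) :=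
    SemidirectProduct.rightHom_surjective
  have hmap : M.map SemidirectProduct.rightHom = L.map SemidirectProduct.rightHom := by
    refine hG _ _ (hL.map _ hsurj) (hM.map _ hsurj) (Subgroup.map_mono hLM) ?_
    rw [← Subgroup.map_top_of_surjective _ hsurj, ← Subgroup.map_commutator]
    exact Subgroup.map_mono hML
  intro m hm
  have hmem : SemidirectProduct.rightHom m ∈ L.map SemidirectProduct.rightHom :=
    hmap ▸ Subgroup.mem_map_of_mem _ hm
  obtain ⟨l, hl, hlm⟩ := hmem
  have hw : m * l⁻¹ ∈ M := M.mul_mem hm (M.inv_mem (hLM hl))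
  have hr : (m * l⁻¹).right = 1 := by
    have : SemidirectProduct.rightHom (m * l⁻¹) = 1 := by
      rw [map_mul, map_inv, hlm, mul_inv_cancel]
    simpa using this
  have hinl : SemidirectProduct.inl (m * l⁻¹).left = m * l⁻¹ := by
    conv_rhs => rw [← SemidirectProduct.inl_left_mul_inr_right (m * l⁻¹)]
    rw [hr, map_one, mul_one]
  have hmemL : SemidirectProduct.inl (m * l⁻¹).left ∈ L := by
    apply base_step hH L M hL hM hLM hML
    rw [hinl]; exact hw
  rw [hinl] at hmemL
  have := L.mul_mem hmemL hl
  simpa using this
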